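/- Let (I, e, N, ᾱ, d) be a fusion algebra datum. Then for every α ∈ I and every finitely supported ξ : I → ℂ one has ‖α · ξ‖₂ ≤ d(α)²·‖ξ‖₂, where (α · ξ)(γ) := ∑_β N_{α,β}^γ·ξ(β) (a finite sum) and ‖ξ‖₂ := (∑_γ |ξ(γ)|²·d(γ)²)^{1/2}. -/

import Mathlib

/-- A fusion algebra datum on an index set `I`: a unit `e`, structure constants
`N`, a conjugation `bar`, and a dimension function `d`, satisfying finiteness
of fusion, the unit rules, Frobenius reciprocity and multiplicativity of `d`. -/
structure FusionData (I : Type*) where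
  e : I
  N : I → I → I → ℕ
  bar : I → I
  d : I → ℝ
  N_fin : ∀ α β, (Function.support (N α β)).Finite
  bar_bar : ∀ α, bar (bar α) = α
  bar_e : bar e = e
  one_le_d : ∀ α, 1 ≤ d α
  d_bar : ∀ α, d (bar α) = d α
  N_unit_right : ∀ α, N α e α = 1
  N_unit_right' : ∀ α γ, γ ≠ α → N α e γ = 0
  N_unit_left : ∀ α, N e α α = 1
  N_unit_left' : ∀ α γ, γ ≠ α → N e α γ = 0
  frob₁ : ∀ α β γ, N α β γ = N (bar α) γ β
  frob₂ : ∀ α β γ, N α β γ = N γ (bar β) α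
  d_mul : ∀ α β, d α * d β = ∑ᶠ γ, (N α β γ : ℝ) * d γ

/-- A length function on a fusion algebra datum. -/
structure IsLength {I : Type*} (F : FusionData I) (ℓ : I → ℝ) : Prop where
  nonneg : ∀ α, 0 ≤ ℓ α
  map_e : ℓ F.e = 0
  map_bar : ∀ α, ℓ (F.bar α) = ℓ α
  subadd : ∀ α β γ, F.N α β γ ≠ 0 → ℓ γ ≤ ℓ α + ℓ β

/-- A length function is proper if balls are finite and only `e` has length 0. -/
def IsProperLength {I : Type*} (F : FusionData I) (ℓ : I → ℝ) : Prop :=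
  (∀ R : ℝ, 0 ≤ R → {α : I | ℓ α ≤ R}.Finite) ∧ ∀ α, ℓ α = 0 → α = F.e

/-- The fusion product `(f · ξ)(γ) = ∑_{α,β} f(α) ξ(β) N_{α,β}^γ`. -/
noncomputable def fmul {I : Type*} (F : FusionData I) (f ξ : I → ℂ) : I → ℂ :=
  fun γ => ∑ᶠ α, ∑ᶠ β, f α * ξ β * (F.N α β γ : ℂ)

/-- The weighted `ℓ²`-norm `‖ξ‖₂ = (∑_γ |ξ(γ)|² d(γ)²)^{1/2}`. -/
noncomputable def norm2 {I : Type*} (F : FusionData I) (ξ : I → ℂ) : ℝ :=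
  Real.sqrt (∑ᶠ γ, ‖ξ γ‖ ^ 2 * F.d γ ^ 2)


private lemma fin_sum_le_finsum {I : Type*} (f : I → ℝ) (hf : (Function.support f).Finite)
    (h0 : ∀ i, 0 ≤ f i) (S : Finset I) : ∑ i ∈ S, f i ≤ ∑ᶠ i, f i := by
  classical
  rw [finsum_eq_finset_sum_of_support_subset f (s := S ∪ hf.toFinset)
    (by intro x hx; simp [Finset.mem_union, hf.mem_toFinset, hx])]
  exact Finset.sum_le_sum_of_subset_of_nonneg Finset.subset_union_left (fun i _ _ => h0 i)

private lemma single_le_finsum'' {I : Type*} (f : I → ℝ) (hf : (Function.support f).Finite)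
    (h0 : ∀ i, 0 ≤ f i) (i : I) : f i ≤ ∑ᶠ j, f j := by
  classical
  simpa using fin_sum_le_finsum f hf h0 {i}

/-- Single-generator norm bound: `‖α · ξ‖₂ ≤ d(α)² ‖ξ‖₂` for
every `α ∈ I` and every finitely supported `ξ : I → ℂ`. -/
theorem stmt_6 {I : Type*} (F : FusionData I) (α : I) (ξ : I → ℂ)
    (hξ : (Function.support ξ).Finite) :
    norm2 F (fun γ => ∑ᶠ β, (F.N α β γ : ℂ) * ξ β) ≤ F.d α ^ 2 * norm2 F ξ := by
  classical
  have hd : ∀ β, (0:ℝ) < F.d β := fun β => lt_of_lt_of_le one_pos (F.one_le_d β)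
  -- finiteness/nonneg of column functions
  have hcolfin : ∀ β, (Function.support fun γ' => (F.N α β γ' : ℝ) * F.d γ').Finite := by
    intro β
    apply (F.N_fin α β).subset
    intro x hx
    simp only [Function.mem_support] at hx ⊢
    intro h0; exact hx (by rw [h0]; simp)
  have hcolnn : ∀ β γ', (0:ℝ) ≤ (F.N α β γ' : ℝ) * F.d γ' := fun β γ' =>
    mul_nonneg (Nat.cast_nonneg _) (hd γ').le
  have key1 : ∀ β γ, F.N α β γ ≠ 0 → F.d γ ≤ F.d α * F.d β := by
    intro β γ h
    calc F.d γ ≤ (F.N α β γ : ℝ) * F.d γ :=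
          le_mul_of_one_le_left (hd γ).le (by exact_mod_cast Nat.one_le_iff_ne_zero.mpr h)
      _ ≤ ∑ᶠ γ', (F.N α β γ' : ℝ) * F.d γ' := single_le_finsum'' _ (hcolfin β) (hcolnn β) γ
      _ = F.d α * F.d β := (F.d_mul α β).symm
  set S : Finset I := hξ.toFinset with hS
  set T : Finset I := S.biUnion (fun β => (F.N_fin α β).toFinset) with hT
  have hTξ : ∀ γ, (∑ᶠ β, (F.N α β γ : ℂ) * ξ β) = ∑ β ∈ S, (F.N α β γ : ℂ) * ξ β := by
    intro γ
    apply finsum_eq_finset_sum_of_support_subset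
    intro β hβ
    simp only [Function.mem_support] at hβ
    have : ξ β ≠ 0 := by intro h0; exact hβ (by rw [h0, mul_zero])
    simpa [hS, hξ.mem_toFinset] using this
  have rowbound : ∀ γ, ∑ β ∈ S, (F.N α β γ : ℝ) * F.d β ≤ F.d α * F.d γ := by
    intro γ
    have hrw : ∀ β, ((F.N α β γ : ℝ)) * F.d β = (F.N (F.bar α) γ β : ℝ) * F.d β := by
      intro β; rw [← F.frob₁]
    calc ∑ β ∈ S, (F.N α β γ : ℝ) * F.d β
        = ∑ β ∈ S, (F.N (F.bar α) γ β : ℝ) * F.d β := Finset.sum_congr rfl fun β _ => hrw β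
      _ ≤ ∑ᶠ β, (F.N (F.bar α) γ β : ℝ) * F.d β := by
          apply fin_sum_le_finsum
          · apply (F.N_fin (F.bar α) γ).subset
            intro x hx
            simp only [Function.mem_support] at hx ⊢
            intro h0; exact hx (by rw [h0]; simp)
          · exact fun β => mul_nonneg (Nat.cast_nonneg _) (hd β).le
      _ = F.d (F.bar α) * F.d γ := (F.d_mul _ _).symm
      _ = F.d α * F.d γ := by rw [F.d_bar]
  have colbound : ∀ β, ∑ γ ∈ T, (F.N α β γ : ℝ) * F.d γ ≤ F.d α * F.d β := by
    intro β
    calc ∑ γ ∈ T, (F.N α β γ : ℝ) * F.d γ ≤ ∑ᶠ γ, (F.N α β γ : ℝ) * F.d γ :=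
          fin_sum_le_finsum _ (hcolfin β) (hcolnn β) T
      _ = F.d α * F.d β := (F.d_mul α β).symm
  set A := ∑ γ ∈ T, ‖∑ β ∈ S, (F.N α β γ : ℂ) * ξ β‖ ^ 2 * F.d γ ^ 2 with hA
  set B := ∑ γ ∈ S, ‖ξ γ‖ ^ 2 * F.d γ ^ 2 with hB
  have hBnn : 0 ≤ B := Finset.sum_nonneg fun γ _ => mul_nonneg (sq_nonneg _) (sq_nonneg _)
  have hLHS : (∑ᶠ γ, ‖(fun γ => ∑ᶠ β, (F.N α β γ : ℂ) * ξ β) γ‖ ^ 2 * F.d γ ^ 2) = A := by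
    rw [hA]
    rw [finsum_eq_finset_sum_of_support_subset _ (s := T) ?_]
    · exact Finset.sum_congr rfl fun γ _ => by beta_reduce; rw [hTξ]
    · intro γ hγ
      simp only [Function.mem_support] at hγ
      have h1 : (∑ β ∈ S, (F.N α β γ : ℂ) * ξ β) ≠ 0 := by
        intro h0
        exact hγ (by rw [hTξ γ, h0]; simp)
      obtain ⟨β, hβS, hβ⟩ := Finset.exists_ne_zero_of_sum_ne_zero h1
      have hN : F.N α β γ ≠ 0 := by
        intro h; exact hβ (by simp [h])
      simp only [hT, Finset.coe_biUnion, Set.mem_iUnion, Finset.mem_coe]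
      exact ⟨β, hβS, (F.N_fin α β).mem_toFinset.mpr hN⟩
  have hRHS : (∑ᶠ γ, ‖ξ γ‖ ^ 2 * F.d γ ^ 2) = B := by
    rw [hB]
    apply finsum_eq_finset_sum_of_support_subset
    intro γ hγ
    simp only [Function.mem_support] at hγ
    have : ξ γ ≠ 0 := by intro h0; exact hγ (by rw [h0]; simp)
    simpa [hS, hξ.mem_toFinset] using this
  have hAB : A ≤ F.d α ^ 4 * B := by
    have Qnn : ∀ γ, (0:ℝ) ≤ ∑ β ∈ S, (F.N α β γ : ℝ) / F.d β * ‖ξ β‖ ^ 2 := fun γ =>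
      Finset.sum_nonneg fun β _ =>
        mul_nonneg (div_nonneg (Nat.cast_nonneg _) (hd β).le) (sq_nonneg _)
    calc A ≤ ∑ γ ∈ T, (F.d α * F.d γ) * (∑ β ∈ S, (F.N α β γ : ℝ) / F.d β * ‖ξ β‖ ^ 2)
              * F.d γ ^ 2 := by
          apply Finset.sum_le_sum; intro γ _
          apply mul_le_mul_of_nonneg_right _ (sq_nonneg _)
          calc ‖∑ β ∈ S, (F.N α β γ : ℂ) * ξ β‖ ^ 2
              ≤ (∑ β ∈ S, (F.N α β γ : ℝ) * ‖ξ β‖) ^ 2 := by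
                apply pow_le_pow_left₀ (norm_nonneg _)
                refine (norm_sum_le _ _).trans (le_of_eq ?_)
                exact Finset.sum_congr rfl fun β _ => by
                  rw [norm_mul, Complex.norm_natCast]
            _ ≤ (∑ β ∈ S, (F.N α β γ : ℝ) * F.d β) *
                  (∑ β ∈ S, (F.N α β γ : ℝ) / F.d β * ‖ξ β‖ ^ 2) := by
                have hcs := Finset.sum_mul_sq_le_sq_mul_sq S
                  (fun β => Real.sqrt ((F.N α β γ : ℝ) * F.d β))
                  (fun β => Real.sqrt ((F.N α β γ : ℝ) / F.d β) * ‖ξ β‖)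
                have e1 : ∀ β, Real.sqrt ((F.N α β γ : ℝ) * F.d β) *
                    (Real.sqrt ((F.N α β γ : ℝ) / F.d β) * ‖ξ β‖)
                    = (F.N α β γ : ℝ) * ‖ξ β‖ := by
                  intro β
                  rw [← mul_assoc, ← Real.sqrt_mul (mul_nonneg (Nat.cast_nonneg _) (hd β).le)]
                  have : (F.N α β γ : ℝ) * F.d β * ((F.N α β γ : ℝ) / F.d β)
                      = ((F.N α β γ : ℝ)) ^ 2 := by
                    field_simp [(hd β).ne']
                  rw [this, Real.sqrt_sq (Nat.cast_nonneg _)]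
                have e2 : ∀ β, Real.sqrt ((F.N α β γ : ℝ) * F.d β) ^ 2
                    = (F.N α β γ : ℝ) * F.d β := fun β =>
                  Real.sq_sqrt (mul_nonneg (Nat.cast_nonneg _) (hd β).le)
                have e3 : ∀ β, (Real.sqrt ((F.N α β γ : ℝ) / F.d β) * ‖ξ β‖) ^ 2
                    = (F.N α β γ : ℝ) / F.d β * ‖ξ β‖ ^ 2 := by
                  intro β
                  rw [mul_pow, Real.sq_sqrt (div_nonneg (Nat.cast_nonneg _) (hd β).le)]
                simp only [e1, e2, e3] at hcs
                exact hcs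
            _ ≤ (F.d α * F.d γ) * (∑ β ∈ S, (F.N α β γ : ℝ) / F.d β * ‖ξ β‖ ^ 2) :=
                mul_le_mul_of_nonneg_right (rowbound γ) (Qnn γ)
      _ = ∑ β ∈ S, ∑ γ ∈ T,
            F.d α * F.d γ * ((F.N α β γ : ℝ) / F.d β * ‖ξ β‖ ^ 2) * F.d γ ^ 2 := by
          rw [Finset.sum_comm]
          apply Finset.sum_congr rfl; intro γ _
          rw [Finset.mul_sum, Finset.sum_mul]
      _ ≤ ∑ β ∈ S, ∑ γ ∈ T,
            F.d α * F.d γ * ((F.N α β γ : ℝ) / F.d β * ‖ξ β‖ ^ 2) * (F.d α * F.d β) ^ 2 := by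
          apply Finset.sum_le_sum; intro β _
          apply Finset.sum_le_sum; intro γ _
          by_cases hN : F.N α β γ = 0
          · simp [hN]
          · exact mul_le_mul_of_nonneg_left
              (pow_le_pow_left₀ (hd γ).le (key1 β γ hN) 2)
              (mul_nonneg (mul_nonneg (hd α).le (hd γ).le)
                (mul_nonneg (div_nonneg (Nat.cast_nonneg _) (hd β).le) (sq_nonneg _)))
      _ = ∑ β ∈ S, (F.d α ^ 3 * F.d β ^ 2 / F.d β * ‖ξ β‖ ^ 2) *
            ∑ γ ∈ T, (F.N α β γ : ℝ) * F.d γ := by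
          apply Finset.sum_congr rfl; intro β _
          rw [Finset.mul_sum]
          apply Finset.sum_congr rfl; intro γ _
          ring
      _ ≤ ∑ β ∈ S, (F.d α ^ 3 * F.d β ^ 2 / F.d β * ‖ξ β‖ ^ 2) * (F.d α * F.d β) := by
          apply Finset.sum_le_sum; intro β _
          exact mul_le_mul_of_nonneg_left (colbound β)
            (mul_nonneg (div_nonneg (mul_nonneg (pow_nonneg (hd α).le 3) (sq_nonneg _))
              (hd β).le) (sq_nonneg _))
      _ = F.d α ^ 4 * B := by
          rw [hB, Finset.mul_sum]
          apply Finset.sum_congr rfl; intro β _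
          have hb : F.d β ≠ 0 := (hd β).ne'
          field_simp
  simp only [norm2]
  rw [hLHS, hRHS]
  calc Real.sqrt A ≤ Real.sqrt (F.d α ^ 4 * B) := Real.sqrt_le_sqrt hAB
    _ = F.d α ^ 2 * Real.sqrt B := by
        rw [Real.sqrt_mul (by positivity), show F.d α ^ 4 = (F.d α ^ 2) ^ 2 by ring,
          Real.sqrt_sq (sq_nonneg _)]
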